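/- arXiv:1604.01743 — 2 statements merged into one kernel-verified Lean document; each statement's English description precedes it below -/
import Mathlib

section
/- Let E be an AL-space and (T_t)_{t∈J} a Markov semigroup (J = ℕ or (0,∞)) admitting a non-zero lower bound. Then the set H of all lower bounds for the semigroup has a maximum h_max satisfying 0 < ‖h_max‖ ≤ 1 and T_t h_max = h_max for all t ∈ J. -/
open Filter Topology

section AuxMarkov

variable {E : Type*} [NormedAddCommGroup E] [Lattice E] [HasSolidNorm E]
    [IsOrderedAddMonoid E] [NormedSpace ℝ E] [CompleteSpace E]

private lemma aux_norm_mono {a b : E} (ha : 0 ≤ a) (hab : a ≤ b) : ‖a‖ ≤ ‖b‖ :=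
  norm_le_norm_of_abs_le_abs (by rw [abs_of_nonneg ha]; exact hab.trans (le_abs_self b))

private lemma aux_eq_of_le_of_norm_le
    (hAL : ∀ f g : E, 0 ≤ f → 0 ≤ g → ‖f + g‖ = ‖f‖ + ‖g‖)
    {a b : E} (ha : 0 ≤ a) (hab : a ≤ b) (hn : ‖b‖ ≤ ‖a‖) : b = a := by
  have h1 : ‖a + (b - a)‖ = ‖a‖ + ‖b - a‖ := hAL a (b - a) ha (sub_nonneg.2 hab)
  rw [add_sub_cancel] at h1
  have h2 : ‖b - a‖ = 0 := le_antisymm (by linarith) (norm_nonneg _)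
  exact sub_eq_zero.mp (norm_eq_zero.mp h2)

private lemma aux_negPart_apply_le {S : E →L[ℝ] E} (hS : ∀ f : E, 0 ≤ f → 0 ≤ S f) (x : E) :
    (S x)⁻ ≤ S x⁻ := by
  have hx : S x = S x⁺ - S x⁻ := by rw [← map_sub, posPart_sub_negPart]
  have h1 : (S x)⁻ = (-(S x))⁺ := by rw [← negPart_neg, neg_neg]
  rw [h1, hx, neg_sub]
  calc (S x⁻ - S x⁺)⁺ ≤ (S x⁻)⁺ :=
        posPart_mono (sub_le_self _ (hS _ (posPart_nonneg x)))
    _ = S x⁻ := posPart_eq_self.2 (hS _ (negPart_nonneg x))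

private lemma aux_norm_negPart_sub (a b : E) : ‖a⁻ - b⁻‖ ≤ ‖a - b‖ := by
  have := lipschitzWith_negPart.dist_le_mul a b
  simpa [dist_eq_norm] using this

private lemma aux_negPart_sub_sup (c a b : E) : (c - a ⊔ b)⁻ ≤ (c - a)⁻ + (c - b)⁻ := by
  rw [sub_sup]
  rw [negPart_def, negPart_def, negPart_def, neg_inf]
  refine sup_le (sup_le ?_ ?_) ?_
  · exact le_sup_left.trans (le_add_of_nonneg_right le_sup_right)
  · exact le_sup_left.trans (le_add_of_nonneg_left le_sup_right)
  · exact add_nonneg le_sup_right le_sup_right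

private lemma aux_le_add_negPart (h y : E) : h ≤ y + (y - h)⁻ := by
  have h1 : (y - h)⁻ = (h - y)⁺ := by rw [← negPart_neg (h - y), neg_sub]
  rw [h1]
  exact sub_le_iff_le_add'.1 (le_posPart (h - y))

private lemma aux_tendsto_zero {ι : Type*} {l : Filter ι} {u : ι → ℝ}
    (h0 : ∀ i, 0 ≤ u i) (h : ∀ ε > (0:ℝ), ∀ᶠ i in l, u i ≤ ε) : Tendsto u l (𝓝 0) := by
  rw [Metric.tendsto_nhds]
  intro ε hε
  filter_upwards [h (ε/2) (by linarith)] with i hi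
  rw [Real.dist_eq, sub_zero, abs_of_nonneg (h0 i)]
  linarith

/-- Nonnegative real multiples of positive elements are positive, proved via dyadic
approximation (no `OrderedSMul` instance is assumed). -/
private lemma aux_smul_nonneg {x : E} (hx : 0 ≤ x) {r : ℝ} (hr : 0 ≤ r) : 0 ≤ r • x := by
  -- dyadic case
  have hpow : ∀ k : ℕ, 0 ≤ ((2:ℝ) ^ k)⁻¹ • x := by
    intro k
    induction k with
    | zero => simpa using hx
    | succ k ih =>
        refine nsmul_two_semiclosed ?_
        have h2 : (2 : ℕ) • (((2:ℝ) ^ (k+1))⁻¹ • x) = ((2:ℝ) ^ k)⁻¹ • x := by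
          rw [← Nat.cast_smul_eq_nsmul ℝ, smul_smul]
          congr 1
          push_cast
          rw [pow_succ]
          field_simp
        rw [h2] at *
        exact ih
  have hdy : ∀ (a k : ℕ), 0 ≤ ((a : ℝ) / 2 ^ k) • x := by
    intro a k
    have h1 : ((a : ℝ) / 2 ^ k) • x = a • (((2:ℝ) ^ k)⁻¹ • x) := by
      rw [← Nat.cast_smul_eq_nsmul ℝ, smul_smul, div_eq_mul_inv]
    rw [h1]
    exact nsmul_nonneg (hpow k) a
  set d : ℕ → ℝ := fun n => (⌈r * 2 ^ n⌉₊ : ℝ) / 2 ^ n with hd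
  have hdle : ∀ n, r ≤ d n := by
    intro n
    rw [hd, le_div_iff₀ (by positivity)]
    exact Nat.le_ceil _
  have hdup : ∀ n, d n ≤ r + (1/2 : ℝ) ^ n := by
    intro n
    rw [hd, div_le_iff₀ (by positivity)]
    have h1 : (⌈r * 2 ^ n⌉₊ : ℝ) < r * 2 ^ n + 1 := Nat.ceil_lt_add_one (by positivity)
    have h3 : ((1:ℝ)/2) ^ n * 2 ^ n = 1 := by
      rw [← mul_pow]; norm_num
    nlinarith
  have hdtend : Tendsto d atTop (𝓝 r) := by
    refine tendsto_of_tendsto_of_tendsto_of_le_of_le (g := fun _ : ℕ => r)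
      (h := fun n : ℕ => r + (1/2:ℝ) ^ n) tendsto_const_nhds ?_ hdle hdup
    have := tendsto_pow_atTop_nhds_zero_of_lt_one (r := (1/2:ℝ)) (by norm_num) (by norm_num)
    simpa using (tendsto_const_nhds (x := r) (f := atTop (α := ℕ))).add this
  have hsmul : Tendsto (fun n => d n • x) atTop (𝓝 (r • x)) := hdtend.smul_const x
  exact isClosed_nonneg.mem_of_tendsto hsmul (Eventually.of_forall fun n => hdy _ n)

/-- Core construction of the maximal lower bound for an abstract operator family. -/
private lemma aux_core {ι : Type*} {l : Filter ι} [l.NeBot]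
    (hAL : ∀ f g : E, 0 ≤ f → 0 ≤ g → ‖f + g‖ = ‖f‖ + ‖g‖)
    (A : ι → E →L[ℝ] E)
    (hnorm : ∀ᶠ i in l, ∀ f : E, 0 ≤ f → ‖A i f‖ = ‖f‖)
    (h0 : E) (h0pos : 0 ≤ h0) (h0ne : h0 ≠ 0)
    (h0lb : ∀ f : E, 0 ≤ f → ‖f‖ = 1 → Tendsto (fun i => ‖(A i f - h0)⁻‖) l (𝓝 0)) :
    ∃ hmax : E, 0 ≤ hmax ∧
      (∀ f : E, 0 ≤ f → ‖f‖ = 1 → Tendsto (fun i => ‖(A i f - hmax)⁻‖) l (𝓝 0)) ∧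
      (∀ h : E, 0 ≤ h → (∀ f : E, 0 ≤ f → ‖f‖ = 1 →
        Tendsto (fun i => ‖(A i f - h)⁻‖) l (𝓝 0)) → h ≤ hmax) ∧
      0 < ‖hmax‖ ∧ ‖hmax‖ ≤ 1 := by
  classical
  set H : Set E := {h : E | 0 ≤ h ∧ ∀ f : E, 0 ≤ f → ‖f‖ = 1 →
    Tendsto (fun i => ‖(A i f - h)⁻‖) l (𝓝 0)} with hHdef
  have h0H : h0 ∈ H := ⟨h0pos, h0lb⟩
  -- the normalized vector f0
  have hn0 : ‖h0‖ ≠ 0 := by simpa using h0ne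
  set f0 : E := ‖h0‖⁻¹ • h0 with hf0def
  have hf0pos : 0 ≤ f0 := aux_smul_nonneg h0pos (by positivity)
  have hf0norm : ‖f0‖ = 1 := by
    rw [hf0def, norm_smul, norm_inv, norm_norm, inv_mul_cancel₀ hn0]
  -- every element of H has norm at most 1
  have hle1 : ∀ h ∈ H, ‖h‖ ≤ 1 := by
    intro h hh
    refine le_of_forall_pos_le_add ?_
    intro ε hε
    have hev : ∀ᶠ i in l, ‖(A i f0 - h)⁻‖ ≤ ε :=
      (hh.2 f0 hf0pos hf0norm).eventually_le_const hε
    obtain ⟨i, hi1, hi2⟩ := (hev.and hnorm).exists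
    have hb : h ≤ A i f0 + (A i f0 - h)⁻ := aux_le_add_negPart h (A i f0)
    have : ‖h‖ ≤ ‖A i f0 + (A i f0 - h)⁻‖ := aux_norm_mono hh.1 hb
    calc ‖h‖ ≤ ‖A i f0 + (A i f0 - h)⁻‖ := this
      _ ≤ ‖A i f0‖ + ‖(A i f0 - h)⁻‖ := norm_add_le _ _
      _ ≤ 1 + ε := by rw [hi2 f0 hf0pos, hf0norm]; linarith
  -- H is closed under suprema
  have hsupH : ∀ h ∈ H, ∀ h' ∈ H, h ⊔ h' ∈ H := by
    intro h hh h' hh'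
    refine ⟨le_sup_of_le_left hh.1, ?_⟩
    intro f hf hf1
    refine squeeze_zero (fun i => norm_nonneg _)
      (g := fun i => ‖(A i f - h)⁻‖ + ‖(A i f - h')⁻‖) ?_ ?_
    · intro i
      calc ‖(A i f - h ⊔ h')⁻‖ ≤ ‖(A i f - h)⁻ + (A i f - h')⁻‖ :=
            aux_norm_mono (negPart_nonneg _) (aux_negPart_sub_sup _ _ _)
        _ ≤ ‖(A i f - h)⁻‖ + ‖(A i f - h')⁻‖ := norm_add_le _ _
    · simpa using (hh.2 f hf hf1).add (hh'.2 f hf hf1)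
  -- the supremum of norms
  set c : ℝ := sSup ((fun h : E => ‖h‖) '' H) with hcdef
  have hHne : ((fun h : E => ‖h‖) '' H).Nonempty := ⟨‖h0‖, h0, h0H, rfl⟩
  have hbdd : BddAbove ((fun h : E => ‖h‖) '' H) := by
    refine ⟨1, ?_⟩
    rintro r ⟨h, hh, rfl⟩
    exact hle1 h hh
  have hcle : ∀ h ∈ H, ‖h‖ ≤ c := fun h hh => le_csSup hbdd ⟨h, hh, rfl⟩
  have hcpos : 0 < c := lt_of_lt_of_le (norm_pos_iff.2 h0ne) (hcle h0 h0H)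
  have hc1 : c ≤ 1 := csSup_le hHne (by rintro r ⟨h, hh, rfl⟩; exact hle1 h hh)
  -- choose an approximating sequence
  have hex : ∀ n : ℕ, ∃ h, h ∈ H ∧ c - 1/(n+1) < ‖h‖ := by
    intro n
    have h1 : (0:ℝ) < 1/(n+1) := by positivity
    obtain ⟨r, hr, hrlt⟩ := exists_lt_of_lt_csSup hHne (show c - 1/(n+1) < c by linarith)
    obtain ⟨h, hh, rfl⟩ := hr
    exact ⟨h, hh, hrlt⟩
  choose hc' hc'H hc'lt using hex
  -- the increasing sequence of partial suprema
  set g : ℕ → E := fun n => Nat.rec (hc' 0) (fun n gn => gn ⊔ hc' (n+1)) n with hgdef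
  have hgsucc : ∀ n, g (n+1) = g n ⊔ hc' (n+1) := fun n => rfl
  have hgH : ∀ n, g n ∈ H := by
    intro n
    induction n with
    | zero => exact hc'H 0
    | succ n ih => rw [hgsucc]; exact hsupH _ ih _ (hc'H (n+1))
  have hgmono : Monotone g := monotone_nat_of_le_succ (fun n => by rw [hgsucc]; exact le_sup_left)
  have hc'le : ∀ n, hc' n ≤ g n := by
    intro n
    cases n with
    | zero => exact le_refl _
    | succ n => rw [hgsucc]; exact le_sup_right
  have hglow : ∀ n : ℕ, c - 1/(n+1) < ‖g n‖ := by
    intro n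
    exact lt_of_lt_of_le (hc'lt n) (aux_norm_mono (hc'H n).1 (hc'le n))
  have hgup : ∀ n, ‖g n‖ ≤ c := fun n => hcle _ (hgH n)
  -- the sequence is Cauchy
  have hkey : ∀ n m : ℕ, n ≤ m → ‖g m - g n‖ ≤ 1/(n+1) := by
    intro n m hnm
    have h1 : ‖g n + (g m - g n)‖ = ‖g n‖ + ‖g m - g n‖ :=
      hAL _ _ (hgH n).1 (sub_nonneg.2 (hgmono hnm))
    rw [add_sub_cancel] at h1
    have h2 := hglow n
    have h3 := hgup m
    linarith
  have hcauchy : CauchySeq g := by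
    refine cauchySeq_of_le_tendsto_0 (fun N : ℕ => 1/(N+1)) ?_
      tendsto_one_div_add_atTop_nhds_zero_nat
    intro n m N hn hm
    rcases le_total n m with h | h
    · rw [dist_eq_norm, norm_sub_rev]
      refine (hkey n m h).trans ?_
      apply one_div_le_one_div_of_le (by positivity)
      have : (N:ℝ) ≤ n := by exact_mod_cast hn
      linarith
    · rw [dist_eq_norm]
      refine (hkey m n h).trans ?_
      apply one_div_le_one_div_of_le (by positivity)
      have : (N:ℝ) ≤ m := by exact_mod_cast hm
      linarith
  obtain ⟨hmax, hgtend⟩ := cauchySeq_tendsto_of_complete hcauchy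
  -- norm of the limit
  have hnormtend : Tendsto (fun n => ‖g n‖) atTop (𝓝 c) := by
    refine tendsto_of_tendsto_of_tendsto_of_le_of_le
      (g := fun n : ℕ => c - 1/(n+1)) (h := fun _ : ℕ => c) ?_ tendsto_const_nhds
      (fun n => (hglow n).le) hgup
    have : Tendsto (fun n : ℕ => 1 / ((n : ℝ) + 1)) atTop (𝓝 0) :=
      tendsto_one_div_add_atTop_nhds_zero_nat
    simpa using (tendsto_const_nhds (x := c) (f := atTop (α := ℕ))).sub this
  have hnormmax : ‖hmax‖ = c := tendsto_nhds_unique hgtend.norm hnormtend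
  -- the limit belongs to H
  have hmaxpos : 0 ≤ hmax :=
    isClosed_nonneg.mem_of_tendsto hgtend (Eventually.of_forall (fun n => (hgH n).1))
  have hmaxlb : ∀ f : E, 0 ≤ f → ‖f‖ = 1 →
      Tendsto (fun i => ‖(A i f - hmax)⁻‖) l (𝓝 0) := by
    intro f hf hf1
    refine aux_tendsto_zero (fun i => norm_nonneg _) ?_
    intro ε hε
    obtain ⟨N, hN⟩ := Metric.tendsto_atTop.1 hgtend (ε/2) (by linarith)
    have hdist : ‖g N - hmax‖ < ε/2 := by
      have := hN N le_rfl; rwa [dist_eq_norm] at this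
    have hev : ∀ᶠ i in l, ‖(A i f - g N)⁻‖ ≤ ε/2 :=
      ((hgH N).2 f hf hf1).eventually_le_const (by linarith)
    filter_upwards [hev] with i hi
    have h1 : (A i f - hmax)⁻ = (A i f - g N)⁻ + ((A i f - hmax)⁻ - (A i f - g N)⁻) := by
      abel
    calc ‖(A i f - hmax)⁻‖
        ≤ ‖(A i f - g N)⁻‖ + ‖(A i f - hmax)⁻ - (A i f - g N)⁻‖ := by
          conv_lhs => rw [h1]
          exact norm_add_le _ _
      _ ≤ ‖(A i f - g N)⁻‖ + ‖(A i f - hmax) - (A i f - g N)‖ := by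
          gcongr; exact aux_norm_negPart_sub _ _
      _ = ‖(A i f - g N)⁻‖ + ‖g N - hmax‖ := by
          congr 1; congr 1; abel
      _ ≤ ε := by linarith
  have hmaxH : hmax ∈ H := ⟨hmaxpos, hmaxlb⟩
  refine ⟨hmax, hmaxpos, hmaxlb, ?_, by rw [hnormmax]; exact hcpos, by rw [hnormmax]; exact hc1⟩
  -- maximality
  intro h hh hlb
  have hhH : h ∈ H := ⟨hh, hlb⟩
  have hsH : h ⊔ hmax ∈ H := hsupH h hhH hmax hmaxH
  have h1 : ‖h ⊔ hmax‖ ≤ ‖hmax‖ := by rw [hnormmax]; exact hcle _ hsH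
  have h2 : h ⊔ hmax = hmax := aux_eq_of_le_of_norm_le hAL hmaxpos le_sup_right h1
  exact sup_eq_right.1 h2

end AuxMarkov

/-- For a Markov semigroup on an AL-space admitting a non-zero lower bound, the set of
all lower bounds has a maximum `h_max`, which satisfies `0 < ‖h_max‖ ≤ 1` and is a fixed
point of the semigroup.  Both the time-discrete case `J = ℕ` (powers of a single Markov
operator) and the case `J = (0,∞)` are covered. -/
theorem markov_semigroup_maximal_lower_bound
    {E : Type*} [NormedAddCommGroup E] [Lattice E] [HasSolidNorm E]
    [IsOrderedAddMonoid E] [NormedSpace ℝ E] [CompleteSpace E]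
    (hAL : ∀ f g : E, 0 ≤ f → 0 ≤ g → ‖f + g‖ = ‖f‖ + ‖g‖) :
    -- the time-discrete case `J = ℕ`
    (∀ S : E →L[ℝ] E,
      (∀ f : E, 0 ≤ f → 0 ≤ S f) → (∀ f : E, 0 ≤ f → ‖S f‖ = ‖f‖) →
      (∃ h : E, 0 ≤ h ∧ h ≠ 0 ∧ ∀ f : E, 0 ≤ f → ‖f‖ = 1 →
        Tendsto (fun n : ℕ => ‖((S ^ n) f - h)⁻‖) atTop (𝓝 0)) →
      ∃ hmax : E, 0 ≤ hmax ∧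
        (∀ f : E, 0 ≤ f → ‖f‖ = 1 →
          Tendsto (fun n : ℕ => ‖((S ^ n) f - hmax)⁻‖) atTop (𝓝 0)) ∧
        (∀ h : E, 0 ≤ h → (∀ f : E, 0 ≤ f → ‖f‖ = 1 →
          Tendsto (fun n : ℕ => ‖((S ^ n) f - h)⁻‖) atTop (𝓝 0)) → h ≤ hmax) ∧
        0 < ‖hmax‖ ∧ ‖hmax‖ ≤ 1 ∧ S hmax = hmax) ∧
    -- the case `J = (0, ∞)`
    (∀ T : ℝ → E →L[ℝ] E,
      (∀ s t : ℝ, 0 < s → 0 < t → T (s + t) = (T s).comp (T t)) →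
      (∀ t : ℝ, 0 < t → ∀ f : E, 0 ≤ f → 0 ≤ T t f) →
      (∀ t : ℝ, 0 < t → ∀ f : E, 0 ≤ f → ‖T t f‖ = ‖f‖) →
      (∃ h : E, 0 ≤ h ∧ h ≠ 0 ∧ ∀ f : E, 0 ≤ f → ‖f‖ = 1 →
        Tendsto (fun t : ℝ => ‖(T t f - h)⁻‖) atTop (𝓝 0)) →
      ∃ hmax : E, 0 ≤ hmax ∧
        (∀ f : E, 0 ≤ f → ‖f‖ = 1 →
          Tendsto (fun t : ℝ => ‖(T t f - hmax)⁻‖) atTop (𝓝 0)) ∧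
        (∀ h : E, 0 ≤ h → (∀ f : E, 0 ≤ f → ‖f‖ = 1 →
          Tendsto (fun t : ℝ => ‖(T t f - h)⁻‖) atTop (𝓝 0)) → h ≤ hmax) ∧
        0 < ‖hmax‖ ∧ ‖hmax‖ ≤ 1 ∧ ∀ t : ℝ, 0 < t → T t hmax = hmax) := by
  constructor
  · -- discrete case
    rintro S Spos Snorm ⟨h0, h0pos, h0ne, h0lb⟩
    have powpos : ∀ n : ℕ, ∀ f : E, 0 ≤ f → 0 ≤ (S ^ n) f := by
      intro n
      induction n with
      | zero => intro f hf; simpa using hf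
      | succ n ih =>
          intro f hf
          rw [pow_succ, ContinuousLinearMap.mul_apply]
          exact ih _ (Spos f hf)
    have pownorm : ∀ n : ℕ, ∀ f : E, 0 ≤ f → ‖(S ^ n) f‖ = ‖f‖ := by
      intro n
      induction n with
      | zero => intro f _; simp
      | succ n ih =>
          intro f hf
          rw [pow_succ, ContinuousLinearMap.mul_apply, ih _ (Spos f hf), Snorm f hf]
    obtain ⟨hmax, hmaxpos, hmaxlb, hmaxmax, hnpos, hn1⟩ :=
      aux_core hAL (fun n : ℕ => S ^ n)
        (Eventually.of_forall (fun n f hf => pownorm n f hf)) h0 h0pos h0ne h0lb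
    refine ⟨hmax, hmaxpos, hmaxlb, hmaxmax, hnpos, hn1, ?_⟩
    -- fixed point
    have hSlb : ∀ f : E, 0 ≤ f → ‖f‖ = 1 →
        Tendsto (fun n : ℕ => ‖((S ^ n) f - S hmax)⁻‖) atTop (𝓝 0) := by
      intro f hf hf1
      have key : ∀ n : ℕ, ‖((S ^ (n+1)) f - S hmax)⁻‖ ≤ ‖((S ^ n) f - hmax)⁻‖ := by
        intro n
        have h1 : (S ^ (n+1)) f - S hmax = S ((S ^ n) f - hmax) := by
          rw [map_sub, pow_succ', ContinuousLinearMap.mul_apply]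
        rw [h1]
        calc ‖(S ((S ^ n) f - hmax))⁻‖ ≤ ‖S (((S ^ n) f - hmax)⁻)‖ :=
              aux_norm_mono (negPart_nonneg _) (aux_negPart_apply_le Spos _)
          _ = ‖((S ^ n) f - hmax)⁻‖ := Snorm _ (negPart_nonneg _)
      have h2 : Tendsto (fun n : ℕ => ‖((S ^ (n+1)) f - S hmax)⁻‖) atTop (𝓝 0) :=
        squeeze_zero (fun n => norm_nonneg _) key (hmaxlb f hf hf1)
      exact (tendsto_add_atTop_iff_nat 1).1 h2
    have hle : S hmax ≤ hmax := hmaxmax _ (Spos hmax hmaxpos) hSlb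
    exact (aux_eq_of_le_of_norm_le hAL (Spos hmax hmaxpos) hle
      (le_of_eq (Snorm hmax hmaxpos).symm)).symm
  · -- continuous case
    rintro T Tsemi Tpos Tnorm ⟨h0, h0pos, h0ne, h0lb⟩
    have hnormev : ∀ᶠ t : ℝ in atTop, ∀ f : E, 0 ≤ f → ‖T t f‖ = ‖f‖ := by
      filter_upwards [eventually_gt_atTop (0:ℝ)] with t ht
      exact Tnorm t ht
    obtain ⟨hmax, hmaxpos, hmaxlb, hmaxmax, hnpos, hn1⟩ :=
      aux_core hAL T hnormev h0 h0pos h0ne h0lb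
    refine ⟨hmax, hmaxpos, hmaxlb, hmaxmax, hnpos, hn1, ?_⟩
    intro s hs
    have hTlb : ∀ f : E, 0 ≤ f → ‖f‖ = 1 →
        Tendsto (fun t : ℝ => ‖(T t f - T s hmax)⁻‖) atTop (𝓝 0) := by
      intro f hf hf1
      have hshift : Tendsto (fun t : ℝ => t - s) atTop atTop := by
        simpa [sub_eq_add_neg] using tendsto_atTop_add_const_right atTop (-s) tendsto_id
      have hg : Tendsto (fun t : ℝ => ‖(T (t - s) f - hmax)⁻‖) atTop (𝓝 0) :=
        (hmaxlb f hf hf1).comp hshift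
      refine squeeze_zero' (Eventually.of_forall (fun t => norm_nonneg _)) ?_ hg
      filter_upwards [eventually_gt_atTop s] with t ht
      have h1 : T t f = T s (T (t - s) f) := by
        have h2 := Tsemi s (t - s) hs (by linarith)
        have h3 : s + (t - s) = t := by ring
        rw [h3] at h2
        rw [h2, ContinuousLinearMap.comp_apply]
      calc ‖(T t f - T s hmax)⁻‖ = ‖(T s (T (t - s) f - hmax))⁻‖ := by rw [h1, ← map_sub]
        _ ≤ ‖T s ((T (t - s) f - hmax)⁻)‖ :=
            aux_norm_mono (negPart_nonneg _) (aux_negPart_apply_le (Tpos s hs) _)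
        _ = ‖(T (t - s) f - hmax)⁻‖ := Tnorm s hs _ (negPart_nonneg _)
    have hle : T s hmax ≤ hmax := hmaxmax _ (Tpos s hs hmax hmaxpos) hTlb
    exact (aux_eq_of_le_of_norm_le hAL (Tpos s hs hmax hmaxpos) hle
      (le_of_eq (Tnorm s hs hmax hmaxpos).symm)).symm
end

section
/- Let E be a Banach lattice and (T_t)_{t∈J} a bounded positive semigroup (J = ℕ or (0,∞)). If there exists a non-zero lower bound h for the semigroup, then there is an equivalent lattice norm ‖·‖₁ on E which is additive on the positive cone, i.e. (E,‖·‖₁) is an AL-space. -/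
open Filter Topology

set_option linter.unusedSectionVars false
set_option maxHeartbeats 1000000

section AuxAL
variable {E : Type*} [NormedAddCommGroup E] [Lattice E] [HasSolidNorm E] [IsOrderedAddMonoid E] [NormedSpace ℝ E]

private lemma half_nonneg' {g : E} (h : 0 ≤ g + g) : 0 ≤ g := by
  have h1 : -g ≤ g := sub_nonneg.mp (by rwa [sub_neg_eq_add])
  have h2 : |g| = g := sup_eq_left.2 h1
  rw [← h2]; exact abs_nonneg g

private lemma dyadic_smul_nonneg' {f : E} (hf : 0 ≤ f) (k : ℕ) :
    ∀ m : ℕ, 0 ≤ ((m : ℝ) / 2 ^ k) • f := by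
  induction k with
  | zero => intro m; simpa [Nat.cast_smul_eq_nsmul] using nsmul_nonneg hf m
  | succ k ih =>
    intro m
    apply half_nonneg'
    have : ((m:ℝ)/2^(k+1)) • f + ((m:ℝ)/2^(k+1)) • f = ((m:ℝ)/2^k) • f := by
      rw [← add_smul]; ring_nf
    rw [this]; exact ih m

private lemma rsmul_nonneg' {a : ℝ} {f : E} (ha : 0 ≤ a) (hf : 0 ≤ f) : 0 ≤ a • f := by
  have h2 : Tendsto (fun k : ℕ => (2:ℝ)^k) atTop atTop :=
    tendsto_pow_atTop_atTop_of_one_lt one_lt_two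
  have hc : Tendsto (fun k : ℕ => (⌊a * 2 ^ k⌋₊ : ℝ) / 2 ^ k) atTop (𝓝 a) := by
    simpa [Function.comp_def] using (tendsto_nat_floor_mul_div_atTop ha).comp h2
  have htd : Tendsto (fun k : ℕ => ((⌊a * 2 ^ k⌋₊ : ℝ) / 2 ^ k) • f) atTop (𝓝 (a • f)) :=
    hc.smul_const f
  exact isClosed_nonneg.mem_of_tendsto htd
    (Eventually.of_forall fun k => dyadic_smul_nonneg' hf k _)

private lemma rsmul_mono' {a : ℝ} {x y : E} (ha : 0 ≤ a) (h : x ≤ y) : a • x ≤ a • y := by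
  have := rsmul_nonneg' ha (sub_nonneg.mpr h)
  rwa [smul_sub, sub_nonneg] at this

private lemma abs_smul_le' {a : ℝ} (ha : 0 ≤ a) (f : E) : |a • f| ≤ a • |f| := by
  rw [show |a • f| = (a • f) ⊔ (-(a • f)) from rfl]
  apply sup_le
  · exact rsmul_mono' ha (le_abs_self f)
  · rw [← smul_neg]; exact rsmul_mono' ha (neg_le_abs f)

private lemma abs_smul_lat (a : ℝ) (f : E) : |a • f| = |a| • |f| := by
  have key : ∀ b : ℝ, 0 ≤ b → |b • f| = b • |f| := by
    intro b hb
    rcases eq_or_lt_of_le hb with rfl | hb'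
    · simp
    · refine le_antisymm (abs_smul_le' hb f) ?_
      have h2 := abs_smul_le' (inv_nonneg.2 hb) (b • f)
      rw [inv_smul_smul₀ hb'.ne'] at h2
      calc b • |f| ≤ b • (b⁻¹ • |b • f|) := rsmul_mono' hb h2
        _ = |b • f| := smul_inv_smul₀ hb'.ne' _
  rcases le_total 0 a with ha | ha
  · rw [abs_of_nonneg ha]; exact key a ha
  · rw [abs_of_nonpos ha, ← abs_neg, ← neg_smul]; exact key (-a) (neg_nonneg.2 ha)

private lemma posPart_smul_lat {a : ℝ} (ha : 0 ≤ a) (f : E) : (a • f)⁺ = a • f⁺ := by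
  have e1 : (2:ℝ) • (a • f)⁺ = (2:ℝ) • (a • f⁺) := by
    have t1 : ((2:ℕ) : ℝ) • (a • f)⁺ = (2:ℕ) • (a • f)⁺ := Nat.cast_smul_eq_nsmul ℝ 2 _
    have t2 : ((2:ℕ) : ℝ) • f⁺ = (2:ℕ) • f⁺ := Nat.cast_smul_eq_nsmul ℝ 2 _
    have e2 : |a • f| + a • f = (2:ℕ) • (a • f)⁺ := abs_add_eq_two_nsmul_posPart _
    have e3 : |f| + f = (2:ℕ) • f⁺ := abs_add_eq_two_nsmul_posPart _
    calc (2:ℝ) • (a • f)⁺ = |a • f| + a • f := by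
          rw [show ((2:ℕ):ℝ) = (2:ℝ) by norm_num] at t1; rw [t1, e2]
      _ = a • (|f| + f) := by rw [abs_smul_lat, abs_of_nonneg ha, smul_add]
      _ = a • ((2:ℝ) • f⁺) := by
          rw [e3, ← t2]; norm_num
      _ = (2:ℝ) • (a • f⁺) := smul_comm a (2:ℝ) _
  have := congrArg (fun z : E => (2:ℝ)⁻¹ • z) e1
  simpa [smul_smul, show (2:ℝ)⁻¹ * 2 = 1 by norm_num] using this

private lemma norm_negPart_le' (x : E) : ‖x⁻‖ ≤ ‖x‖ := by
  apply norm_le_norm_of_abs_le_abs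
  rw [abs_of_nonneg (negPart_nonneg x)]
  exact sup_le (neg_le_abs x) (abs_nonneg x)

private lemma exists_pos_functional (h : E) (hh0 : 0 ≤ h) (hhne : h ≠ 0) :
    ∃ φ : E →ₗ[ℝ] ℝ, (∀ x : E, φ x ≤ ‖x⁺‖) ∧ φ h = ‖h‖ := by
  have Nhom : ∀ c : ℝ, 0 < c → ∀ x : E, ‖(c • x)⁺‖ = c * ‖x⁺‖ := by
    intro c hc x
    rw [posPart_smul_lat hc.le, norm_smul, Real.norm_eq_abs, abs_of_nonneg hc.le]
  have Nadd : ∀ x y : E, ‖(x + y)⁺‖ ≤ ‖x⁺‖ + ‖y⁺‖ := by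
    intro x y
    have h1 : (x + y)⁺ ≤ x⁺ + y⁺ :=
      sup_le (add_le_add (le_posPart x) (le_posPart y))
        (add_nonneg (posPart_nonneg x) (posPart_nonneg y))
    calc ‖(x + y)⁺‖ ≤ ‖x⁺ + y⁺‖ := by
          apply norm_le_norm_of_abs_le_abs
          rw [abs_of_nonneg (posPart_nonneg _),
            abs_of_nonneg (add_nonneg (posPart_nonneg x) (posPart_nonneg y))]
          exact h1
      _ ≤ ‖x⁺‖ + ‖y⁺‖ := norm_add_le _ _
  have hdom : ∀ x : (LinearPMap.mkSpanSingleton (K := ℝ) (σ := RingHom.id ℝ) h ‖h‖ hhne).domain,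
      (LinearPMap.mkSpanSingleton (K := ℝ) (σ := RingHom.id ℝ) h ‖h‖ hhne) x ≤ ‖(x : E)⁺‖ := by
    rintro ⟨x, hx⟩
    obtain ⟨a, rfl⟩ := Submodule.mem_span_singleton.1 hx
    have hval : (LinearPMap.mkSpanSingleton (K := ℝ) (σ := RingHom.id ℝ) h ‖h‖ hhne) ⟨a • h, hx⟩ = a • ‖h‖ :=
      LinearPMap.mkSpanSingleton'_apply _ _ _ a _
    simp only [hval]
    rcases le_total 0 a with ha | ha
    · have : 0 ≤ a • h := rsmul_nonneg' ha hh0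
      rw [posPart_eq_self.2 this, norm_smul, Real.norm_eq_abs, abs_of_nonneg ha, smul_eq_mul]
    · have h1 : a • h ≤ 0 := by
        have h2 : 0 ≤ (-a) • h := rsmul_nonneg' (neg_nonneg.2 ha) hh0
        rw [neg_smul] at h2
        exact neg_nonneg.1 h2
      rw [posPart_eq_zero.2 h1, norm_zero, smul_eq_mul]
      exact mul_nonpos_of_nonpos_of_nonneg ha (norm_nonneg h)
  obtain ⟨φ, hext, hle⟩ := exists_extension_of_le_sublinear
    (LinearPMap.mkSpanSingleton (K := ℝ) (σ := RingHom.id ℝ) h ‖h‖ hhne) (fun x => ‖x⁺‖) Nhom Nadd hdom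
  refine ⟨φ, hle, ?_⟩
  have := hext ⟨h, Submodule.mem_span_singleton_self h⟩
  rwa [LinearPMap.mkSpanSingleton_apply] at this

private lemma key_renorm {ι : Type*} (L : Filter ι) [L.NeBot] (T : ι → E →L[ℝ] E)
    (hpos : ∀ᶠ j in L, ∀ f : E, 0 ≤ f → 0 ≤ T j f)
    (hbdd : ∃ M : ℝ, ∀ᶠ j in L, ‖T j‖ ≤ M)
    (h : E) (hh0 : 0 ≤ h) (hhne : h ≠ 0)
    (hlb : ∀ f : E, 0 ≤ f → ‖f‖ = 1 → Tendsto (fun j => ‖(T j f - h)⁻‖) L (𝓝 0)) :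
    ∃ n₁ : E → ℝ,
      (∃ c₁ > (0:ℝ), ∃ c₂ > (0:ℝ), ∀ f : E, c₁ * ‖f‖ ≤ n₁ f ∧ n₁ f ≤ c₂ * ‖f‖) ∧
      (∀ f g : E, n₁ (f + g) ≤ n₁ f + n₁ g) ∧
      (∀ (a : ℝ) (f : E), n₁ (a • f) = |a| * n₁ f) ∧
      (∀ f g : E, |f| ≤ |g| → n₁ f ≤ n₁ g) ∧
      (∀ f g : E, 0 ≤ f → 0 ≤ g → n₁ (f + g) = n₁ f + n₁ g) := by
  obtain ⟨φ, hφle, hφh⟩ := exists_pos_functional h hh0 hhne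
  -- basic properties of φ
  have φabs : ∀ x : E, |φ x| ≤ ‖x‖ := by
    intro x
    rw [abs_le]
    constructor
    · have := hφle (-x)
      rw [map_neg] at this
      have h2 : ‖(-x)⁺‖ ≤ ‖x‖ := by
        rw [show (-x)⁺ = x⁻ from posPart_neg x]
        exact norm_negPart_le' x
      linarith
    · exact (hφle x).trans (by
        apply norm_le_norm_of_abs_le_abs
        rw [abs_of_nonneg (posPart_nonneg x)]
        exact sup_le (le_abs_self x) (abs_nonneg x))
  have φmono : ∀ {x y : E}, x ≤ y → φ x ≤ φ y := by
    intro x y hxy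
    have h1 : φ (x - y) ≤ ‖(x - y)⁺‖ := hφle _
    rw [posPart_eq_zero.2 (sub_nonpos.2 hxy), norm_zero, map_sub] at h1
    linarith
  obtain ⟨M, hM⟩ := hbdd
  have hM0 : 0 ≤ M := by
    obtain ⟨j, hj⟩ := hM.exists
    exact (norm_nonneg (T j)).trans hj
  -- the ultrafilter
  set U : Ultrafilter ι := Ultrafilter.of L with hU
  have hUL : (U : Filter ι) ≤ L := Ultrafilter.of_le L
  -- limits exist
  have hbddpt : ∀ f : E, ∀ᶠ j in (U : Filter ι),
      φ (T j |f|) ∈ Set.Icc (-(M * ‖f‖)) (M * ‖f‖) := by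
    intro f
    filter_upwards [hUL hM] with j hj
    have h1 : |φ (T j |f|)| ≤ M * ‖f‖ := by
      refine (φabs _).trans ?_
      calc ‖T j |f|‖ ≤ ‖T j‖ * ‖(|f| : E)‖ := (T j).le_opNorm _
        _ = ‖T j‖ * ‖f‖ := by rw [norm_abs_eq_norm]
        _ ≤ M * ‖f‖ := by gcongr
    exact abs_le.1 h1
  have hex : ∀ f : E, ∃ x : ℝ, Tendsto (fun j => φ (T j |f|)) (U : Filter ι) (𝓝 x) := by
    intro f
    obtain ⟨x, -, hx⟩ := (isCompact_Icc (a := -(M * ‖f‖)) (b := M * ‖f‖)).ultrafilter_le_nhds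
      (U.map fun j => φ (T j |f|)) (by
        rw [Ultrafilter.coe_map, le_principal_iff, mem_map]
        exact hbddpt f)
    exact ⟨x, by rwa [Ultrafilter.coe_map] at hx⟩
  set n₁ : E → ℝ := fun f => (hex f).choose with hn₁
  have htd : ∀ f : E, Tendsto (fun j => φ (T j |f|)) (U : Filter ι) (𝓝 (n₁ f)) :=
    fun f => (hex f).choose_spec
  -- homogeneity
  have hom : ∀ (a : ℝ) (f : E), n₁ (a • f) = |a| * n₁ f := by
    intro a f
    have hfun : (fun j => φ (T j |a • f|)) = fun j => |a| * φ (T j |f|) := by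
      funext j
      rw [abs_smul_lat, map_smul, map_smul, smul_eq_mul]
    refine tendsto_nhds_unique (htd (a • f)) ?_
    rw [hfun]
    exact (htd f).const_mul |a|
  -- monotonicity
  have mono : ∀ f g : E, |f| ≤ |g| → n₁ f ≤ n₁ g := by
    intro f g hfg
    refine le_of_tendsto_of_tendsto (htd f) (htd g) ?_
    filter_upwards [hUL hpos] with j hj
    have h1 : T j |f| ≤ T j |g| := by
      have h2 : 0 ≤ T j (|g| - |f|) := hj _ (sub_nonneg.2 hfg)
      rw [map_sub] at h2
      exact sub_nonneg.1 h2
    exact φmono h1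
  -- subadditivity
  have subadd : ∀ f g : E, n₁ (f + g) ≤ n₁ f + n₁ g := by
    intro f g
    refine le_of_tendsto_of_tendsto (htd (f + g)) ((htd f).add (htd g)) ?_
    filter_upwards [hUL hpos] with j hj
    have h1 : T j |f + g| ≤ T j (|f| + |g|) := by
      have h2 : 0 ≤ T j (|f| + |g| - |f + g|) := hj _ (sub_nonneg.2 (abs_add_le f g))
      rw [map_sub] at h2
      exact sub_nonneg.1 h2
    calc φ (T j |f + g|) ≤ φ (T j (|f| + |g|)) := φmono h1
      _ = φ (T j |f|) + φ (T j |g|) := by rw [map_add, map_add]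
  -- additivity on the positive cone
  have addpos : ∀ f g : E, 0 ≤ f → 0 ≤ g → n₁ (f + g) = n₁ f + n₁ g := by
    intro f g hf hg
    have hfun : (fun j => φ (T j |f + g|)) = fun j => φ (T j |f|) + φ (T j |g|) := by
      funext j
      rw [abs_of_nonneg hf, abs_of_nonneg hg, abs_of_nonneg (add_nonneg hf hg),
        map_add, map_add]
    refine tendsto_nhds_unique (htd (f + g)) ?_
    rw [hfun]
    exact (htd f).add (htd g)
  -- norm bounds
  have hhnorm : (0:ℝ) < ‖h‖ := norm_pos_iff.2 hhne
  have upper : ∀ f : E, n₁ f ≤ (M + 1) * ‖f‖ := by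
    intro f
    refine le_of_tendsto (htd f) ?_
    filter_upwards [hUL hM] with j hj
    have h1 : |φ (T j |f|)| ≤ M * ‖f‖ := by
      refine (φabs _).trans ?_
      calc ‖T j |f|‖ ≤ ‖T j‖ * ‖(|f| : E)‖ := (T j).le_opNorm _
        _ = ‖T j‖ * ‖f‖ := by rw [norm_abs_eq_norm]
        _ ≤ M * ‖f‖ := by gcongr
    nlinarith [abs_le.1 h1, norm_nonneg f]
  have lower : ∀ f : E, ‖h‖ * ‖f‖ ≤ n₁ f := by
    intro f
    rcases eq_or_ne f 0 with rfl | hf0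
    · have : n₁ (0 : E) = 0 := by
        refine tendsto_nhds_unique (htd 0) ?_
        have : (fun j => φ (T j |(0:E)|)) = fun _ => (0:ℝ) := by
          funext j; simp
        rw [this]
        exact tendsto_const_nhds
      simp [this]
    · set e : E := ‖f‖⁻¹ • |f| with he
      have hfn : (0:ℝ) < ‖f‖ := norm_pos_iff.2 hf0
      have he0 : 0 ≤ e := rsmul_nonneg' (inv_nonneg.2 hfn.le) (abs_nonneg f)
      have hen : ‖e‖ = 1 := by
        rw [he, norm_smul, Real.norm_eq_abs, abs_of_nonneg (inv_nonneg.2 hfn.le),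
          norm_abs_eq_norm, inv_mul_cancel₀ hfn.ne']
      have herr : Tendsto (fun j => ‖(T j e - h)⁻‖) (U : Filter ι) (𝓝 0) :=
        (hlb e he0 hen).mono_left hUL
      have hlim : Tendsto (fun j => ‖h‖ - ‖(T j e - h)⁻‖) (U : Filter ι) (𝓝 (‖h‖ - 0)) :=
        tendsto_const_nhds.sub herr
      rw [sub_zero] at hlim
      have hne1 : ‖h‖ ≤ n₁ e := by
        refine le_of_tendsto_of_tendsto hlim (htd e) ?_
        filter_upwards [hUL hpos] with j hj
        have hTe : T j |e| = T j e := by rw [abs_of_nonneg he0]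
        set x : E := T j e - h with hx
        have h1 : h - x⁻ ≤ T j e := by
          have h2 : -x⁻ ≤ x := by
            rw [← posPart_sub_negPart x]
            have := posPart_nonneg x
            have h3 : (0:E) - x⁻ ≤ x⁺ - x⁻ := by gcongr
            simpa using h3
          have h4 : h + -x⁻ ≤ h + x := by gcongr
          rw [hx] at h4
          calc h - x⁻ = h + -x⁻ := by abel
            _ ≤ h + (T j e - h) := h4
            _ = T j e := by abel
        have h5 : φ (h - x⁻) ≤ φ (T j e) := φmono h1
        rw [map_sub] at h5
        have h6 : φ (x⁻) ≤ ‖x⁻‖ := (le_abs_self _).trans (φabs _)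
        rw [hTe]
        rw [hφh] at h5
        linarith
      have habs : n₁ |f| = n₁ f := by
        refine tendsto_nhds_unique (htd |f|) ?_
        have : (fun j => φ (T j |(|f|)|)) = fun j => φ (T j |f|) := by
          funext j; rw [abs_abs]
        rw [this]
        exact htd f
      have hsm : |f| = ‖f‖ • e := by
        rw [he, smul_smul, mul_inv_cancel₀ hfn.ne', one_smul]
      calc ‖h‖ * ‖f‖ = ‖f‖ * ‖h‖ := mul_comm _ _
        _ ≤ ‖f‖ * n₁ e := by gcongr
        _ = |‖f‖| * n₁ e := by rw [abs_of_nonneg hfn.le]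
        _ = n₁ (‖f‖ • e) := (hom _ _).symm
        _ = n₁ |f| := by rw [← hsm]
        _ = n₁ f := habs
  exact ⟨n₁, ⟨‖h‖, hhnorm, M + 1, by linarith, fun f => ⟨lower f, upper f⟩⟩,
    subadd, hom, mono, addpos⟩

end AuxAL

/-- If a bounded positive semigroup on a Banach lattice admits a non-zero lower bound,
then the Banach lattice carries an equivalent lattice norm which is additive on the
positive cone, i.e. it is (with that norm) an AL-space.  Both the time-discrete case
`J = ℕ` and the case `J = (0,∞)` are covered. -/
theorem al_renorming_of_lower_bound
    {E : Type*} [NormedAddCommGroup E] [Lattice E] [HasSolidNorm E] [IsOrderedAddMonoid E] [NormedSpace ℝ E] [CompleteSpace E] :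
    -- the time-discrete case `J = ℕ`
    (∀ S : E →L[ℝ] E,
      (∀ f : E, 0 ≤ f → 0 ≤ S f) → (∃ M : ℝ, ∀ n : ℕ, ‖S ^ n‖ ≤ M) →
      (∃ h : E, 0 ≤ h ∧ h ≠ 0 ∧ ∀ f : E, 0 ≤ f → ‖f‖ = 1 →
        Tendsto (fun n : ℕ => ‖((S ^ n) f - h)⁻‖) atTop (𝓝 0)) →
      ∃ n₁ : E → ℝ,
        (∃ c₁ > (0:ℝ), ∃ c₂ > (0:ℝ), ∀ f : E, c₁ * ‖f‖ ≤ n₁ f ∧ n₁ f ≤ c₂ * ‖f‖) ∧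
        (∀ f g : E, n₁ (f + g) ≤ n₁ f + n₁ g) ∧
        (∀ (a : ℝ) (f : E), n₁ (a • f) = |a| * n₁ f) ∧
        (∀ f g : E, |f| ≤ |g| → n₁ f ≤ n₁ g) ∧
        (∀ f g : E, 0 ≤ f → 0 ≤ g → n₁ (f + g) = n₁ f + n₁ g)) ∧
    -- the case `J = (0, ∞)`
    (∀ T : ℝ → E →L[ℝ] E,
      (∀ s t : ℝ, 0 < s → 0 < t → T (s + t) = (T s).comp (T t)) →
      (∀ t : ℝ, 0 < t → ∀ f : E, 0 ≤ f → 0 ≤ T t f) →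
      (∃ M : ℝ, ∀ t : ℝ, 0 < t → ‖T t‖ ≤ M) →
      (∃ h : E, 0 ≤ h ∧ h ≠ 0 ∧ ∀ f : E, 0 ≤ f → ‖f‖ = 1 →
        Tendsto (fun t : ℝ => ‖(T t f - h)⁻‖) atTop (𝓝 0)) →
      ∃ n₁ : E → ℝ,
        (∃ c₁ > (0:ℝ), ∃ c₂ > (0:ℝ), ∀ f : E, c₁ * ‖f‖ ≤ n₁ f ∧ n₁ f ≤ c₂ * ‖f‖) ∧
        (∀ f g : E, n₁ (f + g) ≤ n₁ f + n₁ g) ∧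
        (∀ (a : ℝ) (f : E), n₁ (a • f) = |a| * n₁ f) ∧
        (∀ f g : E, |f| ≤ |g| → n₁ f ≤ n₁ g) ∧
        (∀ f g : E, 0 ≤ f → 0 ≤ g → n₁ (f + g) = n₁ f + n₁ g)) := by
  constructor
  · intro S hSpos hSbdd hSlb
    obtain ⟨h, hh0, hhne, hlb⟩ := hSlb
    obtain ⟨M, hM⟩ := hSbdd
    have hpow : ∀ n : ℕ, ∀ f : E, 0 ≤ f → 0 ≤ (S ^ n) f := by
      intro n
      induction n with
      | zero => intro f hf; simpa using hf
      | succ n ih =>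
        intro f hf
        rw [pow_succ, ContinuousLinearMap.mul_apply]
        exact ih _ (hSpos f hf)
    exact key_renorm atTop (fun n : ℕ => S ^ n)
      (Eventually.of_forall hpow) ⟨M, Eventually.of_forall hM⟩ h hh0 hhne hlb
  · intro T _ hTpos hTbdd hTlb
    obtain ⟨h, hh0, hhne, hlb⟩ := hTlb
    obtain ⟨M, hM⟩ := hTbdd
    refine key_renorm atTop T ?_ ⟨M, ?_⟩ h hh0 hhne hlb
    · filter_upwards [eventually_gt_atTop (0:ℝ)] with t ht
      exact hTpos t ht
    · filter_upwards [eventually_gt_atTop (0:ℝ)] with t ht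
      exact hM t ht
end
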